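/- For all k ≥ 1, m ≥ 0, and (x,y) ∈ ℝ², if (x',y') = G_{km}(x,y) then x' = x + Σ_{j=1}^m δ_{k+j} and y' = (k+m+1)·( y/(k+1) − Σ_{j=1}^m δ_{k+j}/(k+j) ). Moreover, for all k ≥ 1, m ≥ 1, and (x,y) ∈ ℝ², if (x'',y'') = F_{km}(x,y) then x'' = y + Σ_{j=2}^m δ_{k+j} and y'' = (k+m+1)·( x/(k+1) − Σ_{j=2}^m δ_{k+j}/(k+j) ). -/

import Mathlib

open Finset

/-- The sequence `γ` with `γ₁ = γ₂ = 1` and `γ_k = ∏_{j=1}^{⌊(k−1)/2⌋} (2j+1)/(2j)`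
for `k ≥ 3` (the empty product is `1`, so the formula is also valid for `k = 1, 2`). -/
noncomputable def gammaSeq (k : ℕ) : ℝ :=
  ∏ j ∈ Finset.Icc 1 ((k - 1) / 2), (2 * (j : ℝ) + 1) / (2 * (j : ℝ))

/-- `γ̄_k = γ_k / k`. -/
noncomputable def gammaBar (k : ℕ) : ℝ := gammaSeq k / k

/-- `δ_k = (1/3)(k + (−1)^k γ_k)`. -/
noncomputable def deltaSeq (k : ℕ) : ℝ := (1 / 3) * ((k : ℝ) + (-1) ^ k * gammaSeq k)

/-- `f_k(x,y) = (y, ((k+2)/(k+1))·x)`. -/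
noncomputable def fmap (k : ℕ) : ℝ × ℝ → ℝ × ℝ :=
  fun xy => (xy.2, ((k : ℝ) + 2) / ((k : ℝ) + 1) * xy.1)

/-- `g_k(x,y) = (x + δ_{k+1}, ((k+2)/(k+1))·(y − δ_{k+1}))`. -/
noncomputable def gmap (k : ℕ) : ℝ × ℝ → ℝ × ℝ :=
  fun xy => (xy.1 + deltaSeq (k + 1), ((k : ℝ) + 2) / ((k : ℝ) + 1) * (xy.2 - deltaSeq (k + 1)))

/-- `G_{k0} = id` and `G_{km} = g_{k+m−1} ∘ g_{k+m−2} ∘ ⋯ ∘ g_k` for `m ≥ 1`. -/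
noncomputable def Gmap (k : ℕ) : ℕ → (ℝ × ℝ → ℝ × ℝ)
  | 0 => id
  | m + 1 => gmap (k + m) ∘ Gmap k m

/-- `F_{km} = G_{k+1,m−1} ∘ f_k` (for `m ≥ 1`). -/
noncomputable def Fmap (k m : ℕ) : ℝ × ℝ → ℝ × ℝ := Gmap (k + 1) (m - 1) ∘ fmap k

/-- The sets `A_k ⊆ ℝ²`: `A₁ = {(0,0)}` and `A_{k+1} = f_k(A_k) ∪ g_k(A_k)` for
`k ≥ 1` (the value at `0` is junk). -/
noncomputable def Aset : ℕ → Set (ℝ × ℝ)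
  | 0 => ∅
  | 1 => {(0, 0)}
  | k + 2 => fmap (k + 1) '' Aset (k + 1) ∪ gmap (k + 1) '' Aset (k + 1)


lemma icc_shift (m : ℕ) (hm : 1 ≤ m) (f : ℕ → ℝ) :
    ∑ j ∈ Finset.Icc 2 m, f j = ∑ j ∈ Finset.Icc 1 (m - 1), f (j + 1) := by
  rw [show Finset.Icc 2 m
      = Finset.map ⟨fun j => j + 1, add_left_injective 1⟩ (Finset.Icc 1 (m - 1)) by
    ext a
    simp only [Finset.mem_map, Function.Embedding.coeFn_mk, Finset.mem_Icc]
    constructor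
    · intro h; exact ⟨a - 1, by omega, by omega⟩
    · rintro ⟨b, hb, rfl⟩; omega]
  rw [Finset.sum_map]
  rfl

lemma G_formula (k : ℕ) (x y : ℝ) : ∀ m : ℕ,
    (Gmap k m (x, y)).1 = x + ∑ j ∈ Finset.Icc 1 m, deltaSeq (k + j) ∧
    (Gmap k m (x, y)).2
      = ((k : ℝ) + m + 1)
          * (y / ((k : ℝ) + 1) - ∑ j ∈ Finset.Icc 1 m, deltaSeq (k + j) / ((k : ℝ) + j)) := by
  intro m
  induction m with
  | zero =>
    simp [Gmap]
    field_simp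
  | succ m ih =>
    obtain ⟨ih1, ih2⟩ := ih
    have hne : ((k : ℝ) + m + 1) ≠ 0 := by positivity
    constructor
    · show (gmap (k + m) (Gmap k m (x, y))).1 = _
      rw [Finset.sum_Icc_succ_top (by omega : 1 ≤ m + 1)]
      simp only [gmap, ih1]
      rw [show k + m + 1 = k + (m + 1) by omega]
      ring
    · show (gmap (k + m) (Gmap k m (x, y))).2 = _
      rw [Finset.sum_Icc_succ_top (by omega : 1 ≤ m + 1)]
      simp only [gmap, ih2]
      rw [show k + m + 1 = k + (m + 1) by omega]
      push_cast
      field_simp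
      ring

/-- Explicit form of `G_{km}` and `F_{km}`: for `k ≥ 1`, `m ≥ 0`
and `(x,y) ∈ ℝ²`, if `(x',y') = G_{km}(x,y)` then `x' = x + Σ_{j=1}^m δ_{k+j}` and
`y' = (k+m+1)·(y/(k+1) − Σ_{j=1}^m δ_{k+j}/(k+j))`; and for `m ≥ 1`, if
`(x'',y'') = F_{km}(x,y)` then `x'' = y + Σ_{j=2}^m δ_{k+j}` and
`y'' = (k+m+1)·(x/(k+1) − Σ_{j=2}^m δ_{k+j}/(k+j))`. -/
theorem stmt11 (k : ℕ) (hk : 1 ≤ k) (x y : ℝ) :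
    (∀ m : ℕ,
      (Gmap k m (x, y)).1 = x + ∑ j ∈ Finset.Icc 1 m, deltaSeq (k + j) ∧
      (Gmap k m (x, y)).2
        = ((k : ℝ) + m + 1)
            * (y / ((k : ℝ) + 1) - ∑ j ∈ Finset.Icc 1 m, deltaSeq (k + j) / ((k : ℝ) + j))) ∧
    (∀ m : ℕ, 1 ≤ m →
      (Fmap k m (x, y)).1 = y + ∑ j ∈ Finset.Icc 2 m, deltaSeq (k + j) ∧
      (Fmap k m (x, y)).2
        = ((k : ℝ) + m + 1)
            * (x / ((k : ℝ) + 1) - ∑ j ∈ Finset.Icc 2 m, deltaSeq (k + j) / ((k : ℝ) + j))) := by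
  constructor
  · exact fun m => G_formula k x y m
  · intro m hm
    obtain ⟨h1, h2⟩ := G_formula (k + 1) y (((k : ℝ) + 2) / ((k : ℝ) + 1) * x) (m - 1)
    have hF : Fmap k m (x, y) = Gmap (k + 1) (m - 1) (y, ((k : ℝ) + 2) / ((k : ℝ) + 1) * x) := rfl
    have hne : ((k : ℝ) + 1) ≠ 0 := by positivity
    constructor
    · rw [hF, h1, icc_shift m hm]
      congr 1
      apply Finset.sum_congr rfl
      intro j _
      congr 1
      omega
    · rw [hF, h2, icc_shift m hm]
      push_cast [Nat.cast_sub hm]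
      have hS : ∑ j ∈ Finset.Icc 1 (m - 1), deltaSeq (k + (j + 1)) / ((k : ℝ) + (↑j + 1))
          = ∑ j ∈ Finset.Icc 1 (m - 1), deltaSeq (k + 1 + j) / ((k : ℝ) + 1 + ↑j) := by
        apply Finset.sum_congr rfl
        intro j _
        rw [show k + (j + 1) = k + 1 + j by omega]
        ring_nf
      rw [hS]
      have hx : ((k : ℝ) + 2) / ((k : ℝ) + 1) * x / ((k : ℝ) + 1 + 1) = x / ((k : ℝ) + 1) := by
        field_simp
        ring
      rw [hx]
      ring
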